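/- arXiv:1109.3265 — 3 statements merged into one kernel-verified Lean document; each statement's English description precedes it below -/
import Mathlib

section
/- Let A ⊆ [0,1]² be pseudo-convex with an admissible convex covering A₁,…,A_p with p parts, of which q parts are convex subsets of A. Then for any N points x₀,…,x_{N−1} ∈ [0,1]², the absolute difference |(1/N)∑_{n=0}^{N−1} 1_A(x_n) − λ(A)| is at most (2p − q)·J_N, where J_N is the isotropic discrepancy of the point set. -/
open MeasureTheory
open scoped Classical

/-- The unit square in `ℝ²`. -/
def unitSq : Set (EuclideanSpace ℝ (Fin 2)) := {x | ∀ i, x i ∈ Set.Icc (0 : ℝ) 1}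

/-- Local discrepancy of a point set with respect to a set `A`. -/
noncomputable def locDisc (N : ℕ) (x : Fin N → EuclideanSpace ℝ (Fin 2))
    (A : Set (EuclideanSpace ℝ (Fin 2))) : ℝ :=
  |(∑ n, if x n ∈ A then (1 : ℝ) else 0) / N - (volume A).toReal|

/-- Isotropic discrepancy: supremum of local discrepancies over all convex subsets
of the unit square. -/
noncomputable def isoDisc (N : ℕ) (x : Fin N → EuclideanSpace ℝ (Fin 2)) : ℝ :=
  ⨆ A : {A : Set (EuclideanSpace ℝ (Fin 2)) // Convex ℝ A ∧ A ⊆ unitSq},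
    locDisc N x A

lemma unitSq_subset_ball : unitSq ⊆ Metric.closedBall (0 : EuclideanSpace ℝ (Fin 2)) 2 := by
  intro y hy
  rw [Metric.mem_closedBall, dist_zero_right, EuclideanSpace.norm_eq]
  have h1 : ∑ i, ‖y i‖ ^ 2 ≤ 2 := by
    have : ∀ i, ‖y i‖ ^ 2 ≤ 1 := by
      intro i
      have := hy i
      rw [Real.norm_eq_abs, sq_abs]
      nlinarith [this.1, this.2]
    calc ∑ i, ‖y i‖ ^ 2 ≤ ∑ _i : Fin 2, (1 : ℝ) := Finset.sum_le_sum fun i _ => this i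
    _ = 2 := by simp
  calc Real.sqrt (∑ i, ‖y i‖ ^ 2) ≤ Real.sqrt 4 := Real.sqrt_le_sqrt (by linarith)
  _ = 2 := by
      rw [show (4 : ℝ) = 2 ^ 2 by norm_num, Real.sqrt_sq (by norm_num)]

lemma volume_unitSq_ne_top : volume unitSq ≠ ⊤ :=
  ((measure_mono unitSq_subset_ball).trans_lt measure_closedBall_lt_top).ne

lemma locDisc_bounded (N : ℕ) (x : Fin N → EuclideanSpace ℝ (Fin 2))
    {C : Set (EuclideanSpace ℝ (Fin 2))} (hC : C ⊆ unitSq) :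
    locDisc N x C ≤ 1 + (volume unitSq).toReal := by
  have hsum : (0 : ℝ) ≤ ∑ n, if x n ∈ C then (1 : ℝ) else 0 :=
    Finset.sum_nonneg fun n _ => by positivity
  have hsum' : (∑ n, if x n ∈ C then (1 : ℝ) else 0) ≤ N := by
    calc (∑ n, if x n ∈ C then (1 : ℝ) else 0) ≤ ∑ _n : Fin N, (1 : ℝ) :=
          Finset.sum_le_sum fun n _ => by split <;> norm_num
    _ = N := by simp
  have hdiv : (∑ n, if x n ∈ C then (1 : ℝ) else 0) / N ≤ 1 := by
    rcases Nat.eq_zero_or_pos N with h | h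
    · subst h; simp
    · rw [div_le_one (by positivity)]; exact hsum'
  have hv0 : (0 : ℝ) ≤ (volume C).toReal := ENNReal.toReal_nonneg
  have hv : (volume C).toReal ≤ (volume unitSq).toReal :=
    ENNReal.toReal_mono volume_unitSq_ne_top (measure_mono hC)
  rw [locDisc, abs_sub_le_iff]
  constructor <;> [skip; skip] <;>
    · have : (0 : ℝ) ≤ (∑ n, if x n ∈ C then (1 : ℝ) else 0) / N := by positivity
      linarith

lemma locDisc_le_isoDisc (N : ℕ) (x : Fin N → EuclideanSpace ℝ (Fin 2))
    {C : Set (EuclideanSpace ℝ (Fin 2))} (hC : Convex ℝ C) (hC' : C ⊆ unitSq) :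
    locDisc N x C ≤ isoDisc N x := by
  have hb : BddAbove (Set.range fun A : {A : Set (EuclideanSpace ℝ (Fin 2)) //
      Convex ℝ A ∧ A ⊆ unitSq} => locDisc N x A) := by
    refine ⟨1 + (volume unitSq).toReal, ?_⟩
    rintro _ ⟨⟨A, hA1, hA2⟩, rfl⟩
    exact locDisc_bounded N x hA2
  exact le_ciSup hb ⟨C, hC, hC'⟩

/-- A pseudo-convex set with an admissible convex covering of `p` parts,
`q` of which are convex parts of `A`, has local discrepancy at most
`(2p - q)` times the isotropic discrepancy. -/
theorem pseudo_convex_disc (N : ℕ) (x : Fin N → EuclideanSpace ℝ (Fin 2))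
    (A : Set (EuclideanSpace ℝ (Fin 2))) (hA : A ⊆ unitSq)
    (p q : ℕ) (S : Fin p → Set (EuclideanSpace ℝ (Fin 2)))
    (hdisj : Pairwise (Function.onFun Disjoint S))
    (hconv : ∀ j, Convex ℝ (S j))
    (hsub : ∀ j, S j ⊆ unitSq)
    (hcover : A ⊆ ⋃ j, S j)
    (T : Finset (Fin p)) (hq : T.card = q)
    (hT : ∀ j ∈ T, S j ⊆ A)
    (hT' : ∀ j ∉ T, Convex ℝ (S j \ A)) :
    locDisc N x A ≤ (2 * (p : ℝ) - q) * isoDisc N x := by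
  set J := isoDisc N x with hJ
  set c : Set (EuclideanSpace ℝ (Fin 2)) → ℝ :=
    fun B => (∑ n, if x n ∈ B then (1 : ℝ) else 0) / N with hc
  set v : Set (EuclideanSpace ℝ (Fin 2)) → ℝ := fun B => (volume B).toReal with hv
  -- null measurability of the pieces
  have hTeq : ∀ j ∈ T, S j ∩ A = S j := fun j hj =>
    Set.inter_eq_left.mpr (hT j hj)
  have hTeq' : ∀ j ∉ T, S j ∩ A = S j \ (S j \ A) := by
    intro j hj; ext y; simp only [Set.mem_inter_iff, Set.mem_diff]; tauto
  have hnm : ∀ j, NullMeasurableSet (S j ∩ A) volume := by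
    intro j
    by_cases hj : j ∈ T
    · rw [hTeq j hj]; exact (hconv j).nullMeasurableSet (μ := volume)
    · rw [hTeq' j hj]
      exact ((hconv j).nullMeasurableSet (μ := volume)).diff ((hT' j hj).nullMeasurableSet (μ := volume))
  have hfin : ∀ B : Set (EuclideanSpace ℝ (Fin 2)), B ⊆ unitSq → volume B ≠ ⊤ :=
    fun B hB => ((measure_mono hB).trans_lt volume_unitSq_ne_top.lt_top).ne
  -- volume additivity
  have hAeq : A = ⋃ j, S j ∩ A := by
    ext y; constructor
    · intro hy
      obtain ⟨j, hj⟩ := Set.mem_iUnion.mp (hcover hy)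
      exact Set.mem_iUnion.mpr ⟨j, hj, hy⟩
    · rintro hy
      obtain ⟨j, _, hy⟩ := Set.mem_iUnion.mp hy
      exact hy
  have hvol : v A = ∑ j, v (S j ∩ A) := by
    have h1 : volume A = ∑' j, volume (S j ∩ A) := by
      conv_lhs => rw [hAeq]
      exact measure_iUnion₀
        (fun i j hij => ((hdisj hij).mono Set.inter_subset_left
          Set.inter_subset_left).aedisjoint) hnm
    rw [hv]
    simp only [h1, tsum_fintype]
    exact ENNReal.toReal_sum fun j _ =>
      hfin _ ((Set.inter_subset_left).trans (hsub j))
  -- counting additivity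
  have hcount : c A = ∑ j, c (S j ∩ A) := by
    rw [hc]
    simp only [← Finset.sum_div]
    congr 1
    rw [Finset.sum_comm]
    refine Finset.sum_congr rfl fun n _ => ?_
    by_cases hy : x n ∈ A
    · obtain ⟨j₀, hj₀⟩ := Set.mem_iUnion.mp (hcover hy)
      rw [if_pos hy]
      rw [Finset.sum_eq_single j₀]
      · rw [if_pos ⟨hj₀, hy⟩]
      · intro j _ hne
        rw [if_neg]
        intro ⟨h1, _⟩
        exact (hdisj hne).ne_of_mem h1 hj₀ rfl
      · intro h; exact absurd (Finset.mem_univ j₀) h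
    · rw [if_neg hy, eq_comm]
      refine Finset.sum_eq_zero fun j _ => ?_
      rw [if_neg fun h => hy h.2]
  -- per-piece bounds
  have hpiece : ∀ j, |c (S j ∩ A) - v (S j ∩ A)| ≤ if j ∈ T then J else 2 * J := by
    intro j
    by_cases hj : j ∈ T
    · rw [if_pos hj, hTeq j hj]
      exact locDisc_le_isoDisc N x (hconv j) (hsub j)
    · rw [if_neg hj]
      have hcj : c (S j ∩ A) = c (S j) - c (S j \ A) := by
        rw [hc]
        simp only [← Finset.sum_sub_distrib, ← sub_div]
        congr 1
        refine Finset.sum_congr rfl fun n _ => ?_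
        by_cases h1 : x n ∈ S j
        · by_cases h2 : x n ∈ A
          · rw [if_pos ⟨h1, h2⟩, if_pos h1, if_neg (fun h => h.2 h2)]; ring
          · rw [if_neg (fun h => h2 h.2), if_pos h1, if_pos ⟨h1, h2⟩]; ring
        · rw [if_neg (fun h => h1 h.1), if_neg h1, if_neg (fun h => h1 h.1)]; ring
      have hvj : v (S j ∩ A) = v (S j) - v (S j \ A) := by
        have key : volume (S j ∩ A) + volume (S j \ A) = volume (S j) := by
          have := measure_inter_add_diff₀ (μ := volume) (S j) (hnm j)
          rwa [Set.inter_eq_right.mpr Set.inter_subset_left,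
            Set.diff_self_inter] at this
        rw [hv]
        have f1 : volume (S j ∩ A) ≠ ⊤ := hfin _ ((Set.inter_subset_left).trans (hsub j))
        have f2 : volume (S j \ A) ≠ ⊤ := hfin _ ((Set.diff_subset).trans (hsub j))
        have := congrArg ENNReal.toReal key
        rw [ENNReal.toReal_add f1 f2] at this
        linarith
      rw [hcj, hvj]
      have b1 : |c (S j) - v (S j)| ≤ J := locDisc_le_isoDisc N x (hconv j) (hsub j)
      have b2 : |c (S j \ A) - v (S j \ A)| ≤ J :=
        locDisc_le_isoDisc N x (hT' j hj) ((Set.diff_subset).trans (hsub j))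
      calc |c (S j) - c (S j \ A) - (v (S j) - v (S j \ A))|
          = |(c (S j) - v (S j)) - (c (S j \ A) - v (S j \ A))| := by ring_nf
        _ ≤ |c (S j) - v (S j)| + |c (S j \ A) - v (S j \ A)| := abs_sub _ _
        _ ≤ 2 * J := by linarith
  -- put it together
  have hqp : q ≤ p := by
    have := T.card_le_univ
    simpa [hq] using this
  have hJ0 : 0 ≤ J := by
    have := locDisc_le_isoDisc N x (convex_empty) (Set.empty_subset _)
    have h0 : (0 : ℝ) ≤ locDisc N x ∅ := abs_nonneg _
    linarith
  have main : locDisc N x A ≤ ∑ j, (if j ∈ T then J else 2 * J) := by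
    have : locDisc N x A = |∑ j, (c (S j ∩ A) - v (S j ∩ A))| := by
      rw [locDisc, Finset.sum_sub_distrib, ← hcount, ← hvol]
    rw [this]
    exact (Finset.abs_sum_le_sum_abs _ _).trans (Finset.sum_le_sum fun j _ => hpiece j)
  refine main.trans ?_
  have e1 : Finset.univ.filter (· ∈ T) = T := by ext j; simp
  have e2 : (Finset.univ.filter (fun j => ¬ j ∈ T)).card = p - q := by
    rw [Finset.filter_not, e1, Finset.card_sdiff_of_subset (Finset.subset_univ T)]
    simp [hq]
  have : (∑ j, if j ∈ T then J else 2 * J) = q * J + ((p : ℝ) - q) * (2 * J) := by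
    rw [Finset.sum_ite, Finset.sum_const, Finset.sum_const, e1, e2, hq]
    have hpq : ((p - q : ℕ) : ℝ) = (p : ℝ) - q := by
      rw [Nat.cast_sub hqp]
    simp only [nsmul_eq_mul]
    rw [hpq]
  rw [this]
  have hqp' : (q : ℝ) ≤ p := by exact_mod_cast hqp
  nlinarith [hJ0]
end

section
/- For the first N points P_N of a (0,2)-sequence in base b, the isotropic discrepancy satisfies J_N(P_N) ≤ 4√2 (b² + b^{3/2}) / √N. -/
open MeasureTheory
open scoped Classical
open scoped ENNReal

def elemInterval (b d₁ d₂ a₁ a₂ : ℕ) : Set (EuclideanSpace ℝ (Fin 2)) :=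
  {z | z 0 ∈ Set.Ico ((a₁ : ℝ) / b ^ d₁) ((a₁ + 1 : ℝ) / b ^ d₁) ∧
       z 1 ∈ Set.Ico ((a₂ : ℝ) / b ^ d₂) ((a₂ + 1 : ℝ) / b ^ d₂)}

/-- `x` is a `(0,2)`-sequence in base `b`: every block `x_{kb^m},…,x_{(k+1)b^m−1}`
is a `(0,m,2)`-net in base `b`. -/
def IsZeroTwoSeq (b : ℕ) (x : ℕ → EuclideanSpace ℝ (Fin 2)) : Prop :=
  (∀ n i, x n i ∈ Set.Ico (0 : ℝ) 1) ∧
  ∀ m k : ℕ, 0 < m → ∀ d₁ d₂ : ℕ, d₁ + d₂ = m → ∀ a₁ < b ^ d₁, ∀ a₂ < b ^ d₂,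
    ∃! n, n ∈ Finset.Ico (k * b ^ m) ((k + 1) * b ^ m) ∧ x n ∈ elemInterval b d₁ d₂ a₁ a₂


-- ### Auxiliary machinery ###

abbrev Pt := EuclideanSpace ℝ (Fin 2)

def Box (I J : Set ℝ) : Set Pt := {z | z 0 ∈ I ∧ z 1 ∈ J}

lemma box_eq_preimage (I J : Set ℝ) :
    Box I J = ⇑(MeasurableEquiv.toLp 2 (Fin 2 → ℝ)).symm ⁻¹' (Set.univ.pi ![I, J]) := by
  ext z
  simp [Box, MeasurableEquiv.toLp_symm_apply, Set.mem_pi, Fin.forall_fin_two]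

lemma box_measurable {I J : Set ℝ} (hI : MeasurableSet I) (hJ : MeasurableSet J) :
    MeasurableSet (Box I J) := by
  rw [box_eq_preimage]
  exact (MeasurableEquiv.toLp 2 (Fin 2 → ℝ)).symm.measurable
    (MeasurableSet.univ_pi (by intro i; fin_cases i <;> assumption))

lemma volume_box {I J : Set ℝ} (hI : MeasurableSet I) (hJ : MeasurableSet J) :
    volume (Box I J) = volume I * volume J := by
  rw [box_eq_preimage]
  rw [(EuclideanSpace.volume_preserving_symm_measurableEquiv_toLp (Fin 2)).measure_preimage
    (MeasurableSet.univ_pi (by intro i; fin_cases i <;> assumption)).nullMeasurableSet]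
  rw [volume_pi_pi, Fin.prod_univ_two]
  simp

lemma elem_eq_box (b d₁ d₂ a₁ a₂ : ℕ) :
    elemInterval b d₁ d₂ a₁ a₂ =
      Box (Set.Ico ((a₁ : ℝ) / b ^ d₁) ((a₁ + 1 : ℝ) / b ^ d₁))
          (Set.Ico ((a₂ : ℝ) / b ^ d₂) ((a₂ + 1 : ℝ) / b ^ d₂)) := rfl

lemma volume_elem (b d₁ d₂ a₁ a₂ : ℕ) (hb : 0 < b) :
    volume (elemInterval b d₁ d₂ a₁ a₂) =
      ENNReal.ofReal (((b:ℝ) ^ d₁)⁻¹) * ENNReal.ofReal (((b:ℝ) ^ d₂)⁻¹) := by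
  rw [elem_eq_box, volume_box measurableSet_Ico measurableSet_Ico]
  rw [Real.volume_Ico, Real.volume_Ico]
  congr 1 <;> [skip; skip] <;> congr 1 <;> field_simp <;> ring

-- unique index lemma
lemma exists_unique_idx (K : ℕ) (hK : 0 < K) (t : ℝ) (h0 : 0 ≤ t) (h1 : t < 1) :
    ∃! a : ℕ, a < K ∧ t ∈ Set.Ico ((a:ℝ)/K) ((a+1:ℝ)/K) := by
  have hKR : (0:ℝ) < K := by exact_mod_cast hK
  refine ⟨⌊t*K⌋₊, ⟨?_, ?_, ?_⟩, ?_⟩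
  · have : t * K < K := by nlinarith
    exact Nat.floor_lt (by positivity) |>.2 (by exact_mod_cast this)
  · rw [div_le_iff₀ hKR]
    exact Nat.floor_le (by positivity)
  · rw [lt_div_iff₀ hKR]
    have := Nat.lt_floor_add_one (t*K)
    push_cast
    linarith
  · rintro a ⟨-, ha1, ha2⟩
    rw [div_le_iff₀ hKR] at ha1
    rw [lt_div_iff₀ hKR] at ha2
    symm
    rw [Nat.floor_eq_iff (by positivity)]
    push_cast at ha2 ⊢
    exact ⟨ha1, ha2⟩

lemma combo_coord (p q : Pt) (t : ℝ) (i : Fin 2) :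
    (t • p + (1 - t) • q) i = t * p i + (1 - t) * q i := by
  simp [PiLp.add_apply, PiLp.smul_apply, smul_eq_mul]

lemma combo_gt {t p q z : ℝ} (ht0 : 0 ≤ t) (ht1 : t ≤ 1) (hp : z < p) (hq : z < q) :
    z < t * p + (1 - t) * q := by
  rcases eq_or_lt_of_le ht0 with h | h
  · rw [← h]; simpa using hq
  · nlinarith

lemma combo_lt {t p q z : ℝ} (ht0 : 0 ≤ t) (ht1 : t ≤ 1) (hp : p < z) (hq : q < z) :
    t * p + (1 - t) * q < z := by
  nlinarith [combo_gt (p := -p) (q := -q) (z := -z) ht0 ht1 (by linarith) (by linarith)]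

/-- If a convex set has points in all four open quadrants around `z`, then `z ∈ A`. -/
lemma mem_of_quadrants {A : Set Pt} (hA : Convex ℝ A) (z : Pt)
    (q₁ : Pt) (hq₁ : q₁ ∈ A) (h₁₀ : z 0 < q₁ 0) (h₁₁ : z 1 < q₁ 1)
    (q₂ : Pt) (hq₂ : q₂ ∈ A) (h₂₀ : z 0 < q₂ 0) (h₂₁ : q₂ 1 < z 1)
    (q₃ : Pt) (hq₃ : q₃ ∈ A) (h₃₀ : q₃ 0 < z 0) (h₃₁ : q₃ 1 < z 1)
    (q₄ : Pt) (hq₄ : q₄ ∈ A) (h₄₀ : q₄ 0 < z 0) (h₄₁ : z 1 < q₄ 1) :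
    z ∈ A := by
  -- r₁ on segment q₁ q₂ with second coord = z 1, first coord > z 0
  set t₁ : ℝ := (z 1 - q₂ 1) / (q₁ 1 - q₂ 1) with ht₁
  have hd₁ : (0:ℝ) < q₁ 1 - q₂ 1 := by linarith
  have ht₁0 : 0 ≤ t₁ := div_nonneg (by linarith) (by linarith)
  have ht₁1 : t₁ ≤ 1 := by rw [ht₁, div_le_one hd₁]; linarith
  set r₁ : Pt := t₁ • q₁ + (1 - t₁) • q₂ with hr₁
  have hr₁A : r₁ ∈ A := hA hq₁ hq₂ ht₁0 (by linarith) (by ring)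
  have hr₁1 : r₁ 1 = z 1 := by
    rw [hr₁, combo_coord, ht₁]; field_simp; ring
  have hr₁0 : z 0 < r₁ 0 := by
    rw [hr₁, combo_coord]; exact combo_gt ht₁0 ht₁1 h₁₀ h₂₀
  -- r₂ on segment q₄ q₃ with second coord = z 1, first coord < z 0
  set t₂ : ℝ := (z 1 - q₃ 1) / (q₄ 1 - q₃ 1) with ht₂
  have hd₂ : (0:ℝ) < q₄ 1 - q₃ 1 := by linarith
  have ht₂0 : 0 ≤ t₂ := div_nonneg (by linarith) (by linarith)
  have ht₂1 : t₂ ≤ 1 := by rw [ht₂, div_le_one hd₂]; linarith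
  set r₂ : Pt := t₂ • q₄ + (1 - t₂) • q₃ with hr₂
  have hr₂A : r₂ ∈ A := hA hq₄ hq₃ ht₂0 (by linarith) (by ring)
  have hr₂1 : r₂ 1 = z 1 := by
    rw [hr₂, combo_coord, ht₂]; field_simp; ring
  have hr₂0 : r₂ 0 < z 0 := by
    rw [hr₂, combo_coord]; exact combo_lt ht₂0 ht₂1 h₄₀ h₃₀
  -- z on segment r₁ r₂
  set s : ℝ := (z 0 - r₂ 0) / (r₁ 0 - r₂ 0) with hs
  have hds : (0:ℝ) < r₁ 0 - r₂ 0 := by linarith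
  have hs0 : 0 ≤ s := div_nonneg (by linarith) (by linarith)
  have hs1 : s ≤ 1 := by rw [hs, div_le_one hds]; linarith
  have hzA : s • r₁ + (1 - s) • r₂ ∈ A := hA hr₁A hr₂A hs0 (by linarith) (by ring)
  have : s • r₁ + (1 - s) • r₂ = z := by
    ext i
    fin_cases i
    · show (s • r₁ + (1 - s) • r₂) 0 = z 0
      rw [combo_coord, hs]; field_simp; ring
    · show (s • r₁ + (1 - s) • r₂) 1 = z 1
      rw [combo_coord, hr₁1, hr₂1]; ring
  rwa [this] at hzA

lemma antichain_card_A (K₁ K₂ : ℕ) (S : Finset (ℕ × ℕ))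
    (hS : ∀ p ∈ S, p.1 < K₁ ∧ p.2 < K₂)
    (h : ∀ p ∈ S, ∀ q ∈ S, ¬(p.1 < q.1 ∧ p.2 < q.2)) : S.card ≤ K₁ + K₂ := by
  have hcard := Finset.card_le_card_of_injOn (s := S) (f := fun p : ℕ × ℕ => p.1 + (K₂ - p.2))
    (t := Finset.range (K₁ + K₂)) ?_ ?_
  · simpa using hcard
  · intro p hp
    have := hS p hp
    simp only [Finset.coe_range, Set.mem_Iio, Finset.mem_range]
    omega
  · intro p hp q hq hfe
    simp only at hfe
    have hp' := hS p hp
    have hq' := hS q hq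
    have h1 := h p hp q hq
    have h2 := h q hq p hp
    have : p.1 = q.1 ∧ p.2 = q.2 := by omega
    exact Prod.ext this.1 this.2

lemma antichain_card_B (K₁ K₂ : ℕ) (S : Finset (ℕ × ℕ))
    (hS : ∀ p ∈ S, p.1 < K₁ ∧ p.2 < K₂)
    (h : ∀ p ∈ S, ∀ q ∈ S, ¬(p.1 < q.1 ∧ q.2 < p.2)) : S.card ≤ K₁ + K₂ := by
  have hcard := Finset.card_le_card_of_injOn (s := S) (f := fun p : ℕ × ℕ => p.1 + p.2)
    (t := Finset.range (K₁ + K₂)) ?_ ?_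
  · simpa using hcard
  · intro p hp
    have := hS p hp
    simp only [Finset.coe_range, Set.mem_Iio, Finset.mem_range]
    omega
  · intro p hp q hq hfe
    simp only at hfe
    have hp' := hS p hp
    have hq' := hS q hq
    have h1 := h p hp q hq
    have h2 := h q hq p hp
    have : p.1 = q.1 ∧ p.2 = q.2 := by omega
    exact Prod.ext this.1 this.2

lemma div_cast_lt {K : ℕ} (hK : 0 < K) {a c : ℕ} (h : a < c) :
    ((a : ℝ) + 1) / K ≤ (c : ℝ) / K := by
  have hKR : (0:ℝ) < K := by exact_mod_cast hK
  have h' : ((a:ℝ) + 1) ≤ (c:ℝ) := by exact_mod_cast h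
  gcongr

lemma elem_mem_iff {b d₁ d₂ a₁ a₂ : ℕ} {z : Pt} :
    z ∈ elemInterval b d₁ d₂ a₁ a₂ ↔
      ((a₁:ℝ) / ((b^d₁ : ℕ) : ℝ) ≤ z 0 ∧ z 0 < ((a₁:ℝ)+1) / ((b^d₁:ℕ):ℝ)) ∧
      ((a₂:ℝ) / ((b^d₂ : ℕ) : ℝ) ≤ z 1 ∧ z 1 < ((a₂:ℝ)+1) / ((b^d₂:ℕ):ℝ)) := by
  have h₁ : ((b^d₁ : ℕ) : ℝ) = (b:ℝ)^d₁ := by push_cast; ring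
  have h₂ : ((b^d₂ : ℕ) : ℝ) = (b:ℝ)^d₂ := by push_cast; ring
  simp only [elemInterval, Set.mem_setOf_eq, Set.mem_Ico, h₁, h₂]

lemma exists_unique_cell (b d₁ d₂ : ℕ) (hb : 0 < b) (z : Pt)
    (h0 : z 0 ∈ Set.Ico (0:ℝ) 1) (h1 : z 1 ∈ Set.Ico (0:ℝ) 1) :
    ∃! p : ℕ × ℕ, (p.1 < b ^ d₁ ∧ p.2 < b ^ d₂) ∧ z ∈ elemInterval b d₁ d₂ p.1 p.2 := by
  obtain ⟨a₁, ⟨ha₁K, ha₁⟩, hu₁⟩ := exists_unique_idx (b ^ d₁) (pow_pos hb _) (z 0) h0.1 h0.2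
  obtain ⟨a₂, ⟨ha₂K, ha₂⟩, hu₂⟩ := exists_unique_idx (b ^ d₂) (pow_pos hb _) (z 1) h1.1 h1.2
  rw [Set.mem_Ico] at ha₁ ha₂
  refine ⟨(a₁, a₂), ⟨⟨ha₁K, ha₂K⟩, elem_mem_iff.mpr ⟨ha₁, ha₂⟩⟩, ?_⟩
  rintro ⟨c₁, c₂⟩ ⟨⟨hc₁, hc₂⟩, hm⟩
  obtain ⟨hm₁, hm₂⟩ := elem_mem_iff.mp hm
  have e₁ : c₁ = a₁ := hu₁ c₁ ⟨hc₁, Set.mem_Ico.mpr hm₁⟩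
  have e₂ : c₂ = a₂ := hu₂ c₂ ⟨hc₂, Set.mem_Ico.mpr hm₂⟩
  exact Prod.ext e₁ e₂

lemma cell_in_unit {b d₁ d₂ a₁ a₂ : ℕ} (hb : 0 < b) (h₁ : a₁ < b^d₁) (h₂ : a₂ < b^d₂)
    {z : Pt} (hz : z ∈ elemInterval b d₁ d₂ a₁ a₂) :
    z 0 ∈ Set.Ico (0:ℝ) 1 ∧ z 1 ∈ Set.Ico (0:ℝ) 1 := by
  obtain ⟨⟨l₁, u₁⟩, l₂, u₂⟩ := elem_mem_iff.mp hz
  have hK₁ : (0:ℝ) < ((b^d₁ : ℕ):ℝ) := by exact_mod_cast pow_pos hb d₁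
  have hK₂ : (0:ℝ) < ((b^d₂ : ℕ):ℝ) := by exact_mod_cast pow_pos hb d₂
  have c₁ : ((a₁:ℝ)+1) ≤ ((b^d₁:ℕ):ℝ) := by exact_mod_cast h₁
  have c₂ : ((a₂:ℝ)+1) ≤ ((b^d₂:ℕ):ℝ) := by exact_mod_cast h₂
  constructor <;> constructor
  · exact le_trans (by positivity) l₁
  · exact lt_of_lt_of_le u₁ (by rw [div_le_one hK₁]; exact c₁)
  · exact le_trans (by positivity) l₂
  · exact lt_of_lt_of_le u₂ (by rw [div_le_one hK₂]; exact c₂)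

lemma net_bound (b d₁ d₂ : ℕ) (hb : 0 < b) (x : ℕ → Pt)
    (hpts : ∀ n i, x n i ∈ Set.Ico (0:ℝ) 1) (o : ℕ)
    (hnet : ∀ a₁ < b ^ d₁, ∀ a₂ < b ^ d₂,
        ∃! n, n ∈ Finset.Ico o (o + b ^ (d₁ + d₂)) ∧ x n ∈ elemInterval b d₁ d₂ a₁ a₂)
    (A : Set Pt) (hA : Convex ℝ A) (hAs : A ⊆ unitSq) :
    |(((Finset.Ico o (o + b ^ (d₁ + d₂))).filter (fun n => x n ∈ A)).card : ℝ)
      - (b : ℝ) ^ (d₁ + d₂) * (volume A).toReal| ≤ 4 * ((b:ℝ) ^ d₁ + (b:ℝ) ^ d₂) := by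
  classical
  have hK₁ : 0 < b ^ d₁ := pow_pos hb _
  have hK₂ : 0 < b ^ d₂ := pow_pos hb _
  set cell : ℕ × ℕ → Set Pt := fun p => elemInterval b d₁ d₂ p.1 p.2 with hcell
  set G : Finset (ℕ × ℕ) := Finset.range (b ^ d₁) ×ˢ Finset.range (b ^ d₂) with hG
  set blk : Finset ℕ := Finset.Ico o (o + b ^ (d₁ + d₂)) with hblk
  set Mf : Finset (ℕ × ℕ) := G.filter (fun p => (cell p ∩ A).Nonempty) with hMf
  set If : Finset (ℕ × ℕ) := G.filter (fun p => cell p ⊆ A) with hIf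
  have hGmem : ∀ {p : ℕ × ℕ}, p ∈ G ↔ (p.1 < b ^ d₁ ∧ p.2 < b ^ d₂) := by
    intro p
    simp [hG, Finset.mem_product]
  -- counting: If.card ≤ count ≤ Mf.card
  have hcount1 : If.card ≤ (blk.filter (fun n => x n ∈ A)).card := by
    apply Finset.card_le_card_of_injOn
      (f := fun p => if h : p.1 < b ^ d₁ ∧ p.2 < b ^ d₂
        then (hnet p.1 h.1 p.2 h.2).exists.choose else 0)
    · intro p hp
      obtain ⟨hpG, hpsub⟩ := Finset.mem_filter.mp hp
      have hb' := hGmem.mp hpG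
      simp only [dif_pos hb']
      obtain ⟨hn, hcellmem⟩ := (hnet p.1 hb'.1 p.2 hb'.2).exists.choose_spec
      exact Finset.mem_filter.mpr ⟨hn, hpsub hcellmem⟩
    · intro p hp q hq hfe
      simp only at hfe
      obtain ⟨hpG, -⟩ := Finset.mem_filter.mp (Finset.mem_coe.mp hp)
      obtain ⟨hqG, -⟩ := Finset.mem_filter.mp (Finset.mem_coe.mp hq)
      have hbp := hGmem.mp hpG
      have hbq := hGmem.mp hqG
      rw [dif_pos hbp, dif_pos hbq] at hfe
      obtain ⟨-, hcp⟩ := (hnet p.1 hbp.1 p.2 hbp.2).exists.choose_spec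
      obtain ⟨-, hcq⟩ := (hnet q.1 hbq.1 q.2 hbq.2).exists.choose_spec
      rw [hfe] at hcp
      set n := (hnet q.1 hbq.1 q.2 hbq.2).exists.choose
      exact (exists_unique_cell b d₁ d₂ hb (x n) (hpts n 0) (hpts n 1)).unique
        ⟨hbp, hcp⟩ ⟨hbq, hcq⟩
  have hcount2 : (blk.filter (fun n => x n ∈ A)).card ≤ Mf.card := by
    apply Finset.card_le_card_of_injOn
      (f := fun n => (exists_unique_cell b d₁ d₂ hb (x n) (hpts n 0) (hpts n 1)).exists.choose)
    · intro n hn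
      obtain ⟨hnb, hnA⟩ := Finset.mem_filter.mp hn
      obtain ⟨⟨h1, h2⟩, hcellmem⟩ :=
        (exists_unique_cell b d₁ d₂ hb (x n) (hpts n 0) (hpts n 1)).exists.choose_spec
      exact Finset.mem_filter.mpr ⟨hGmem.mpr ⟨h1, h2⟩, ⟨x n, hcellmem, hnA⟩⟩
    · intro n hn n' hn' hfe
      simp only at hfe
      obtain ⟨hnb, -⟩ := Finset.mem_filter.mp (Finset.mem_coe.mp hn)
      obtain ⟨hnb', -⟩ := Finset.mem_filter.mp (Finset.mem_coe.mp hn')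
      obtain ⟨⟨h1, h2⟩, hcp⟩ :=
        (exists_unique_cell b d₁ d₂ hb (x n) (hpts n 0) (hpts n 1)).exists.choose_spec
      obtain ⟨-, hcp'⟩ :=
        (exists_unique_cell b d₁ d₂ hb (x n') (hpts n' 0) (hpts n' 1)).exists.choose_spec
      rw [← hfe] at hcp'
      exact (hnet _ h1 _ h2).unique ⟨hnb, hcp⟩ ⟨hnb', hcp'⟩
  -- combinatorial bound on boundary cells
  have hMI : Mf.card ≤ If.card + 4 * (b ^ d₁ + b ^ d₂) := by
    set SUR := Mf.filter (fun p => ∃ z ∈ cell p, ∀ q ∈ A, ¬(z 0 < q 0 ∧ z 1 < q 1)) with hSUR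
    set SDR := Mf.filter (fun p => ∃ z ∈ cell p, ∀ q ∈ A, ¬(z 0 < q 0 ∧ q 1 < z 1)) with hSDR
    set SUL := Mf.filter (fun p => ∃ z ∈ cell p, ∀ q ∈ A, ¬(q 0 < z 0 ∧ z 1 < q 1)) with hSUL
    set SDL := Mf.filter (fun p => ∃ z ∈ cell p, ∀ q ∈ A, ¬(q 0 < z 0 ∧ q 1 < z 1)) with hSDL
    have hsplit : Mf ⊆ If ∪ (SUR ∪ SDR ∪ SUL ∪ SDL) := by
      intro p hp
      rw [Finset.mem_union]
      by_cases hpI : p ∈ If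
      · exact Or.inl hpI
      right
      have hpG := (Finset.mem_filter.mp hp).1
      have hnsub : ¬ cell p ⊆ A := fun h => hpI (Finset.mem_filter.mpr ⟨hpG, h⟩)
      obtain ⟨z, hzc, hzA⟩ := Set.not_subset.mp hnsub
      by_contra hcon
      simp only [Finset.mem_union, not_or] at hcon
      obtain ⟨⟨⟨h1, h2⟩, h3⟩, h4⟩ := hcon
      have e1 : ∃ q ∈ A, z 0 < q 0 ∧ z 1 < q 1 := by
        by_contra he; push_neg at he
        exact h1 (Finset.mem_filter.mpr ⟨hp, ⟨z, hzc, fun q hq hpat => (he q hq hpat.1).not_gt hpat.2⟩⟩)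
      have e2 : ∃ q ∈ A, z 0 < q 0 ∧ q 1 < z 1 := by
        by_contra he; push_neg at he
        exact h2 (Finset.mem_filter.mpr ⟨hp, ⟨z, hzc, fun q hq hpat => (he q hq hpat.1).not_gt hpat.2⟩⟩)
      have e3 : ∃ q ∈ A, q 0 < z 0 ∧ z 1 < q 1 := by
        by_contra he; push_neg at he
        exact h3 (Finset.mem_filter.mpr ⟨hp, ⟨z, hzc, fun q hq hpat => (he q hq hpat.1).not_gt hpat.2⟩⟩)
      have e4 : ∃ q ∈ A, q 0 < z 0 ∧ q 1 < z 1 := by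
        by_contra he; push_neg at he
        exact h4 (Finset.mem_filter.mpr ⟨hp, ⟨z, hzc, fun q hq hpat => (he q hq hpat.1).not_gt hpat.2⟩⟩)
      obtain ⟨q₁, hq₁, h₁₀, h₁₁⟩ := e1
      obtain ⟨q₂, hq₂, h₂₀, h₂₁⟩ := e2
      obtain ⟨q₄, hq₄, h₄₀, h₄₁⟩ := e3
      obtain ⟨q₃, hq₃, h₃₀, h₃₁⟩ := e4
      exact hzA (mem_of_quadrants hA z q₁ hq₁ h₁₀ h₁₁ q₂ hq₂ h₂₀ h₂₁ q₃ hq₃ h₃₀ h₃₁ q₄ hq₄ h₄₀ h₄₁)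
    have hSb : ∀ T : Finset (ℕ × ℕ), T ⊆ Mf → ∀ p ∈ T, p.1 < b^d₁ ∧ p.2 < b^d₂ :=
      fun T hT p hp => hGmem.mp (Finset.mem_filter.mp (hT hp)).1
    have hURcard : SUR.card ≤ b^d₁ + b^d₂ := by
      apply antichain_card_A _ _ _ (hSb _ (Finset.filter_subset _ _))
      rintro p hp q hq ⟨hlt1, hlt2⟩
      obtain ⟨hpM, z, hzc, hquad⟩ := Finset.mem_filter.mp hp
      have hqM := (Finset.mem_filter.mp hq).1
      obtain ⟨w, hwc, hwA⟩ := (Finset.mem_filter.mp hqM).2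
      apply hquad w hwA
      obtain ⟨⟨zl0, zu0⟩, zl1, zu1⟩ := elem_mem_iff.mp hzc
      obtain ⟨⟨wl0, wu0⟩, wl1, wu1⟩ := elem_mem_iff.mp hwc
      have i1 := div_cast_lt hK₁ hlt1
      have i2 := div_cast_lt hK₂ hlt2
      exact ⟨by linarith, by linarith⟩
    have hDRcard : SDR.card ≤ b^d₁ + b^d₂ := by
      apply antichain_card_B _ _ _ (hSb _ (Finset.filter_subset _ _))
      rintro p hp q hq ⟨hlt1, hlt2⟩
      obtain ⟨hpM, z, hzc, hquad⟩ := Finset.mem_filter.mp hp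
      have hqM := (Finset.mem_filter.mp hq).1
      obtain ⟨w, hwc, hwA⟩ := (Finset.mem_filter.mp hqM).2
      apply hquad w hwA
      obtain ⟨⟨zl0, zu0⟩, zl1, zu1⟩ := elem_mem_iff.mp hzc
      obtain ⟨⟨wl0, wu0⟩, wl1, wu1⟩ := elem_mem_iff.mp hwc
      have i1 := div_cast_lt hK₁ hlt1
      have i2 := div_cast_lt hK₂ hlt2
      exact ⟨by linarith, by linarith⟩
    have hULcard : SUL.card ≤ b^d₁ + b^d₂ := by
      apply antichain_card_B _ _ _ (hSb _ (Finset.filter_subset _ _))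
      rintro p hp q hq ⟨hlt1, hlt2⟩
      obtain ⟨hqM', z, hzc, hquad⟩ := Finset.mem_filter.mp hq
      have hpM := (Finset.mem_filter.mp hp).1
      obtain ⟨w, hwc, hwA⟩ := (Finset.mem_filter.mp hpM).2
      apply hquad w hwA
      obtain ⟨⟨zl0, zu0⟩, zl1, zu1⟩ := elem_mem_iff.mp hzc
      obtain ⟨⟨wl0, wu0⟩, wl1, wu1⟩ := elem_mem_iff.mp hwc
      have i1 := div_cast_lt hK₁ hlt1
      have i2 := div_cast_lt hK₂ hlt2
      exact ⟨by linarith, by linarith⟩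
    have hDLcard : SDL.card ≤ b^d₁ + b^d₂ := by
      apply antichain_card_A _ _ _ (hSb _ (Finset.filter_subset _ _))
      rintro p hp q hq ⟨hlt1, hlt2⟩
      obtain ⟨hqM', z, hzc, hquad⟩ := Finset.mem_filter.mp hq
      have hpM := (Finset.mem_filter.mp hp).1
      obtain ⟨w, hwc, hwA⟩ := (Finset.mem_filter.mp hpM).2
      apply hquad w hwA
      obtain ⟨⟨zl0, zu0⟩, zl1, zu1⟩ := elem_mem_iff.mp hzc
      obtain ⟨⟨wl0, wu0⟩, wl1, wu1⟩ := elem_mem_iff.mp hwc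
      have i1 := div_cast_lt hK₁ hlt1
      have i2 := div_cast_lt hK₂ hlt2
      exact ⟨by linarith, by linarith⟩
    have c1 := Finset.card_le_card hsplit
    have c2 := Finset.card_union_le If (SUR ∪ SDR ∪ SUL ∪ SDL)
    have c3 := Finset.card_union_le (SUR ∪ SDR ∪ SUL) SDL
    have c4 := Finset.card_union_le (SUR ∪ SDR) SUL
    have c5 := Finset.card_union_le SUR SDR
    omega
  -- volume bounds
  have hvol_cell : ∀ p : ℕ × ℕ, volume (cell p)
      = ENNReal.ofReal (((b:ℝ)^d₁)⁻¹) * ENNReal.ofReal (((b:ℝ)^d₂)⁻¹) :=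
    fun p => volume_elem b d₁ d₂ p.1 p.2 hb
  set v : ℝ≥0∞ := ENNReal.ofReal (((b:ℝ)^d₁)⁻¹) * ENNReal.ofReal (((b:ℝ)^d₂)⁻¹) with hv
  have hvolA_fin : volume A ≠ ⊤ := by
    have hsub : A ⊆ Box (Set.Icc 0 1) (Set.Icc 0 1) := fun z hz => ⟨hAs hz 0, hAs hz 1⟩
    have h1 : volume A ≤ 1 := by
      calc volume A ≤ volume (Box (Set.Icc 0 1) (Set.Icc 0 1)) := measure_mono hsub
      _ = 1 := by
          rw [volume_box measurableSet_Icc measurableSet_Icc]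
          simp [Real.volume_Icc]
    exact ne_top_of_le_ne_top ENNReal.one_ne_top h1
  have hcellmeas : ∀ p : ℕ × ℕ, MeasurableSet (cell p) := fun p =>
    box_measurable measurableSet_Ico measurableSet_Ico
  have hdisj : ∀ T : Finset (ℕ × ℕ), T ⊆ G → (↑T : Set (ℕ × ℕ)).PairwiseDisjoint cell := by
    intro T hT p hp q hq hne
    apply Set.disjoint_left.mpr
    intro z hzp hzq
    have hbp := hGmem.mp (hT (Finset.mem_coe.mp hp))
    have hbq := hGmem.mp (hT (Finset.mem_coe.mp hq))
    obtain ⟨hz0, hz1⟩ := cell_in_unit hb hbp.1 hbp.2 hzp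
    exact hne ((exists_unique_cell b d₁ d₂ hb z hz0 hz1).unique ⟨hbp, hzp⟩ ⟨hbq, hzq⟩)
  have hunion : ∀ T : Finset (ℕ × ℕ), T ⊆ G → volume (⋃ p ∈ T, cell p) = T.card • v := by
    intro T hT
    rw [measure_biUnion_finset (hdisj T hT) (fun p _ => hcellmeas p)]
    rw [Finset.sum_congr rfl (fun p _ => hvol_cell p), Finset.sum_const]
  have hIle : (If.card : ℝ≥0∞) * v ≤ volume A := by
    rw [← nsmul_eq_mul, ← hunion If (Finset.filter_subset _ _)]
    exact measure_mono (Set.iUnion₂_subset fun p hp => (Finset.mem_filter.mp hp).2)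
  have hMge : volume A ≤ (Mf.card : ℝ≥0∞) * v := by
    have hsub : A ⊆ ((⋃ p ∈ Mf, cell p) ∪ Box (Set.Icc 1 1) (Set.Icc 0 1))
        ∪ Box (Set.Icc 0 1) (Set.Icc 1 1) := by
      intro z hz
      have h0 := hAs hz 0
      have h1 := hAs hz 1
      by_cases e0 : z 0 = 1
      · exact Or.inl (Or.inr ⟨⟨e0.ge, e0.le⟩, h1⟩)
      by_cases e1 : z 1 = 1
      · exact Or.inr ⟨h0, ⟨e1.ge, e1.le⟩⟩
      · left; left
        have hz0 : z 0 ∈ Set.Ico (0:ℝ) 1 := ⟨h0.1, lt_of_le_of_ne h0.2 e0⟩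
        have hz1 : z 1 ∈ Set.Ico (0:ℝ) 1 := ⟨h1.1, lt_of_le_of_ne h1.2 e1⟩
        obtain ⟨p, ⟨hbp, hcp⟩, -⟩ := exists_unique_cell b d₁ d₂ hb z hz0 hz1
        exact Set.mem_biUnion (Finset.mem_filter.mpr ⟨hGmem.mpr hbp, ⟨z, hcp, hz⟩⟩) hcp
    have hb1 : volume (Box (Set.Icc (1:ℝ) 1) (Set.Icc (0:ℝ) 1)) = 0 := by
      rw [volume_box measurableSet_Icc measurableSet_Icc]
      simp [Real.volume_Icc]
    have hb2 : volume (Box (Set.Icc (0:ℝ) 1) (Set.Icc (1:ℝ) 1)) = 0 := by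
      rw [volume_box measurableSet_Icc measurableSet_Icc]
      simp [Real.volume_Icc]
    calc volume A ≤ _ := measure_mono hsub
    _ ≤ volume ((⋃ p ∈ Mf, cell p) ∪ Box (Set.Icc 1 1) (Set.Icc 0 1))
        + volume (Box (Set.Icc 0 1) (Set.Icc 1 1)) := measure_union_le _ _
    _ ≤ (volume (⋃ p ∈ Mf, cell p) + volume (Box (Set.Icc 1 1) (Set.Icc 0 1)))
        + volume (Box (Set.Icc 0 1) (Set.Icc 1 1)) := by
        gcongr
        exact measure_union_le _ _
    _ = volume (⋃ p ∈ Mf, cell p) := by rw [hb1, hb2, add_zero, add_zero]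
    _ = Mf.card • v := hunion Mf (Finset.filter_subset _ _)
    _ = (Mf.card : ℝ≥0∞) * v := nsmul_eq_mul _ _
  have hvfin : v ≠ ⊤ := ENNReal.mul_ne_top ENNReal.ofReal_ne_top ENNReal.ofReal_ne_top
  have hvre : v.toReal = ((b:ℝ)^d₁)⁻¹ * ((b:ℝ)^d₂)⁻¹ := by
    rw [hv, ENNReal.toReal_mul, ENNReal.toReal_ofReal (by positivity),
      ENNReal.toReal_ofReal (by positivity)]
  have hIreal : (If.card : ℝ) * (((b:ℝ)^d₁)⁻¹ * ((b:ℝ)^d₂)⁻¹) ≤ (volume A).toReal := by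
    have h := ENNReal.toReal_mono hvolA_fin hIle
    rwa [ENNReal.toReal_mul, ENNReal.toReal_natCast, hvre] at h
  have hMreal : (volume A).toReal ≤ (Mf.card : ℝ) * (((b:ℝ)^d₁)⁻¹ * ((b:ℝ)^d₂)⁻¹) := by
    have h := ENNReal.toReal_mono (ENNReal.mul_ne_top (ENNReal.natCast_ne_top _) hvfin) hMge
    rwa [ENNReal.toReal_mul, ENNReal.toReal_natCast, hvre] at h
  have hP₁ : (0:ℝ) < (b:ℝ)^d₁ := by positivity
  have hP₂ : (0:ℝ) < (b:ℝ)^d₂ := by positivity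
  have hI2 : (If.card : ℝ) ≤ (volume A).toReal * ((b:ℝ)^d₁ * (b:ℝ)^d₂) := by
    have h := mul_le_mul_of_nonneg_right hIreal (le_of_lt (mul_pos hP₁ hP₂))
    calc (If.card:ℝ) = If.card * ((((b:ℝ)^d₁)⁻¹*((b:ℝ)^d₂)⁻¹) * ((b:ℝ)^d₁*(b:ℝ)^d₂)) := by
          field_simp
    _ = (If.card * (((b:ℝ)^d₁)⁻¹*((b:ℝ)^d₂)⁻¹)) * ((b:ℝ)^d₁*(b:ℝ)^d₂) := by ring
    _ ≤ (volume A).toReal * ((b:ℝ)^d₁*(b:ℝ)^d₂) := h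
  have hM2 : (volume A).toReal * ((b:ℝ)^d₁ * (b:ℝ)^d₂) ≤ (Mf.card : ℝ) := by
    have h := mul_le_mul_of_nonneg_right hMreal (le_of_lt (mul_pos hP₁ hP₂))
    calc (volume A).toReal * ((b:ℝ)^d₁*(b:ℝ)^d₂)
        ≤ (Mf.card * (((b:ℝ)^d₁)⁻¹*((b:ℝ)^d₂)⁻¹)) * ((b:ℝ)^d₁*(b:ℝ)^d₂) := h
    _ = Mf.card := by field_simp
  have hc1' : (If.card : ℝ) ≤ ((blk.filter (fun n => x n ∈ A)).card : ℝ) := by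
    exact_mod_cast hcount1
  have hc2' : ((blk.filter (fun n => x n ∈ A)).card : ℝ) ≤ (Mf.card : ℝ) := by
    exact_mod_cast hcount2
  have hMI' : (Mf.card : ℝ) ≤ (If.card : ℝ) + 4 * ((b:ℝ)^d₁ + (b:ℝ)^d₂) := by
    have h : (Mf.card : ℝ) ≤ ((If.card + 4 * (b ^ d₁ + b ^ d₂) : ℕ) : ℝ) := by
      exact_mod_cast hMI
    push_cast at h
    linarith
  have hbm : (b:ℝ)^(d₁+d₂) = (b:ℝ)^d₁ * (b:ℝ)^d₂ := pow_add _ _ _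
  rw [hbm, abs_le]
  constructor <;> linarith

section Recursion

variable (x : ℕ → Pt) (A : Set Pt)

noncomputable def dsc (volA : ℝ) (o n : ℕ) : ℝ :=
  |(((Finset.Ico o (o + n)).filter (fun i => x i ∈ A)).card : ℝ) - n * volA|

variable {volA : ℝ}

lemma dsc_zero (o : ℕ) : dsc x A volA o 0 = 0 := by
  simp [dsc]

lemma dsc_add (o c d : ℕ) :
    dsc x A volA o (c + d) ≤ dsc x A volA o c + dsc x A volA (o + c) d := by
  unfold dsc
  have hsplit : Finset.Ico o (o + (c + d)) = Finset.Ico o (o + c) ∪ Finset.Ico (o + c) (o + c + d) := by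
    rw [← Nat.add_assoc]
    exact (Finset.Ico_union_Ico_eq_Ico (by omega) (by omega)).symm
  have hdisj : Disjoint (Finset.Ico o (o + c)) (Finset.Ico (o + c) (o + c + d)) :=
    Finset.Ico_disjoint_Ico_consecutive o (o+c) (o+c+d)
  rw [hsplit, Finset.filter_union, Finset.card_union_of_disjoint
    (Finset.disjoint_filter_filter hdisj)]
  have : ((c + d : ℕ) : ℝ) * volA = c * volA + d * volA := by push_cast; ring
  rw [this]
  push_cast
  calc |(((Finset.filter (fun i => x i ∈ A) (Finset.Ico o (o + c))).card : ℝ) +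
        ((Finset.filter (fun i => x i ∈ A) (Finset.Ico (o + c) (o + c + d))).card : ℝ))
        - ((c : ℝ) * volA + (d : ℝ) * volA)|
      = |((((Finset.filter (fun i => x i ∈ A) (Finset.Ico o (o + c))).card : ℝ)) - c * volA)
        + ((((Finset.filter (fun i => x i ∈ A) (Finset.Ico (o + c) (o + c + d))).card : ℝ)) - d * volA)| := by
        ring_nf
  _ ≤ _ := abs_add_le _ _

end Recursion

lemma dsc_one (x : ℕ → Pt) (A : Set Pt) {volA : ℝ} (h0 : 0 ≤ volA) (h1 : volA ≤ 1) (o : ℕ) :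
    dsc x A volA o 1 ≤ 1 := by
  unfold dsc
  have hone : Finset.Ico o (o + 1) = {o} := by
    rw [Finset.Ico_add_one_right_eq_Icc, Finset.Icc_self]
  rw [hone, Finset.filter_singleton]
  rw [abs_le]
  by_cases h : x o ∈ A
  · rw [if_pos h]
    simp only [Finset.card_singleton, Nat.cast_one, one_mul]
    exact ⟨by linarith, by linarith⟩
  · rw [if_neg h]
    simp only [Finset.card_empty, Nat.cast_zero, Nat.cast_one, one_mul]
    exact ⟨by linarith, by linarith⟩

lemma volA_mem (A : Set Pt) (hAs : A ⊆ unitSq) :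
    0 ≤ (volume A).toReal ∧ (volume A).toReal ≤ 1 := by
  refine ⟨ENNReal.toReal_nonneg, ?_⟩
  have hsub : A ⊆ Box (Set.Icc 0 1) (Set.Icc 0 1) := fun z hz => ⟨hAs hz 0, hAs hz 1⟩
  have h1 : volume A ≤ 1 := by
    calc volume A ≤ volume (Box (Set.Icc 0 1) (Set.Icc 0 1)) := measure_mono hsub
    _ = 1 := by
        rw [volume_box measurableSet_Icc measurableSet_Icc]
        simp [Real.volume_Icc]
  calc (volume A).toReal ≤ (1 : ℝ≥0∞).toReal := ENNReal.toReal_mono ENNReal.one_ne_top h1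
  _ = 1 := by simp

lemma dsc_block (b : ℕ) (hb : 2 ≤ b) (x : ℕ → Pt)
    (hpts : ∀ n i, x n i ∈ Set.Ico (0:ℝ) 1)
    (hx2 : ∀ m k : ℕ, 0 < m → ∀ d₁ d₂ : ℕ, d₁ + d₂ = m → ∀ a₁ < b ^ d₁, ∀ a₂ < b ^ d₂,
      ∃! n, n ∈ Finset.Ico (k * b ^ m) ((k + 1) * b ^ m) ∧ x n ∈ elemInterval b d₁ d₂ a₁ a₂)
    (A : Set Pt) (hA : Convex ℝ A) (hAs : A ⊆ unitSq) (m k : ℕ) :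
    dsc x A ((volume A).toReal) (k * b ^ m) (b ^ m)
      ≤ 4 * (Real.sqrt b + 1) * (Real.sqrt b) ^ m := by
  have hb0 : 0 < b := by omega
  have hs1 : (1:ℝ) ≤ Real.sqrt b := by
    rw [show (1:ℝ) = Real.sqrt 1 by simp]
    exact Real.sqrt_le_sqrt (by exact_mod_cast hb0)
  rcases Nat.eq_zero_or_pos m with hm | hm
  · subst hm
    simp only [pow_zero, mul_one]
    refine le_trans (dsc_one x A (volA_mem A hAs).1 (volA_mem A hAs).2 _) ?_
    nlinarith
  · set d₁ := (m + 1) / 2 with hd₁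
    set d₂ := m / 2 with hd₂
    have hdm : d₁ + d₂ = m := by omega
    have hnet := hx2 m k hm d₁ d₂ hdm
    have hnet' : ∀ a₁ < b ^ d₁, ∀ a₂ < b ^ d₂,
        ∃! n, n ∈ Finset.Ico (k * b ^ (d₁ + d₂)) (k * b ^ (d₁ + d₂) + b ^ (d₁ + d₂))
          ∧ x n ∈ elemInterval b d₁ d₂ a₁ a₂ := by
      rw [hdm]
      have : (k + 1) * b ^ m = k * b ^ m + b ^ m := by ring
      rw [← this]
      exact hnet
    have hnb := net_bound b d₁ d₂ hb0 x hpts (k * b ^ (d₁ + d₂)) hnet' A hA hAs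
    rw [hdm] at hnb
    unfold dsc
    have hcast : ((b ^ m : ℕ) : ℝ) = (b:ℝ) ^ m := by push_cast; ring
    rw [hcast]
    refine le_trans hnb ?_
    have e1 : (b:ℝ) ^ d₁ ≤ (Real.sqrt b) ^ (m + 1) := by
      have : (b:ℝ) = (Real.sqrt b) ^ 2 := (Real.sq_sqrt (by positivity)).symm
      nth_rewrite 1 [this]
      rw [← pow_mul]
      have hexp : 2 * d₁ ≤ m + 1 := by omega
      exact pow_le_pow_right₀ hs1 hexp
    have e2 : (b:ℝ) ^ d₂ ≤ (Real.sqrt b) ^ m := by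
      have : (b:ℝ) = (Real.sqrt b) ^ 2 := (Real.sq_sqrt (by positivity)).symm
      nth_rewrite 1 [this]
      rw [← pow_mul]
      have hexp : 2 * d₂ ≤ m := by omega
      exact pow_le_pow_right₀ hs1 hexp
    have : (Real.sqrt b) ^ (m + 1) = Real.sqrt b * (Real.sqrt b) ^ m := by ring
    nlinarith [pow_nonneg (Real.sqrt_nonneg (b:ℝ)) m]

lemma dsc_rec (b : ℕ) (hb : 2 ≤ b) (x : ℕ → Pt)
    (hpts : ∀ n i, x n i ∈ Set.Ico (0:ℝ) 1)
    (hx2 : ∀ m k : ℕ, 0 < m → ∀ d₁ d₂ : ℕ, d₁ + d₂ = m → ∀ a₁ < b ^ d₁, ∀ a₂ < b ^ d₂,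
      ∃! n, n ∈ Finset.Ico (k * b ^ m) ((k + 1) * b ^ m) ∧ x n ∈ elemInterval b d₁ d₂ a₁ a₂)
    (A : Set Pt) (hA : Convex ℝ A) (hAs : A ⊆ unitSq) :
    ∀ n K : ℕ, dsc x A ((volume A).toReal) (K * b ^ (Nat.log b n + 1)) n
      ≤ 4 * (Real.sqrt b + 1) ^ 2 * ((Real.sqrt b) ^ (Nat.log b n + 1) - 1) := by
  have hb0 : 0 < b := by omega
  have hs1 : (1:ℝ) ≤ Real.sqrt b := by
    rw [show (1:ℝ) = Real.sqrt 1 by simp]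
    exact Real.sqrt_le_sqrt (by exact_mod_cast hb0)
  have hs0 : (0:ℝ) ≤ Real.sqrt b := Real.sqrt_nonneg _
  intro n
  induction n using Nat.strong_induction_on with
  | _ n IH =>
  intro K
  rcases Nat.eq_zero_or_pos n with h0 | hn
  · subst h0
    rw [dsc_zero]
    have : (1:ℝ) ≤ (Real.sqrt b) ^ (Nat.log b 0 + 1) := one_le_pow₀ hs1
    nlinarith
  · set L := Nat.log b n with hL
    set q := n / b ^ L with hq
    set r := n % b ^ L with hr
    have hbLpos : 0 < b ^ L := pow_pos hb0 L
    have hbL : b ^ L ≤ n := Nat.pow_log_le_self b hn.ne'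
    have hlt : n < b ^ (L + 1) := Nat.lt_pow_succ_log_self (by omega) n
    have hq1 : 1 ≤ q := (Nat.one_le_div_iff hbLpos).mpr hbL
    have hqb : q < b := by
      rw [hq, Nat.div_lt_iff_lt_mul hbLpos]
      calc n < b ^ (L + 1) := hlt
      _ = b * b ^ L := by ring
    have hrn : r < b ^ L := Nat.mod_lt _ hbLpos
    have hsplitn : q * b ^ L + r = n := by
      rw [hq, hr, Nat.mul_comm]
      exact Nat.div_add_mod n (b ^ L)
    have hqblocks : ∀ j : ℕ, dsc x A ((volume A).toReal) (K * b ^ (L + 1)) (j * b ^ L)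
        ≤ j * (4 * (Real.sqrt b + 1) * (Real.sqrt b) ^ L) := by
      intro j
      induction j with
      | zero => simp [dsc_zero]
      | succ j hj =>
        have hsp : (j + 1) * b ^ L = j * b ^ L + b ^ L := by ring
        rw [hsp]
        refine le_trans (dsc_add x A _ _ _) ?_
        have hoff : K * b ^ (L + 1) + j * b ^ L = (K * b + j) * b ^ L := by ring
        have hblk : dsc x A ((volume A).toReal) (K * b ^ (L + 1) + j * b ^ L) (b ^ L)
            ≤ 4 * (Real.sqrt b + 1) * (Real.sqrt b) ^ L := by
          rw [hoff]
          exact dsc_block b hb x hpts hx2 A hA hAs L (K * b + j)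
        push_cast
        linarith
    have hstep : dsc x A ((volume A).toReal) (K * b ^ (L + 1)) n
        ≤ q * (4 * (Real.sqrt b + 1) * (Real.sqrt b) ^ L)
          + dsc x A ((volume A).toReal) (K * b ^ (L + 1) + q * b ^ L) r := by
      conv_lhs => rw [← hsplitn]
      refine le_trans (dsc_add x A _ _ _) ?_
      linarith [hqblocks q]
    have hrem : dsc x A ((volume A).toReal) (K * b ^ (L + 1) + q * b ^ L) r
        ≤ 4 * (Real.sqrt b + 1) ^ 2 * ((Real.sqrt b) ^ L - 1) := by
      rcases Nat.eq_zero_or_pos r with hr0 | hr1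
      · rw [hr0, dsc_zero]
        have : (1:ℝ) ≤ (Real.sqrt b) ^ L := one_le_pow₀ hs1
        nlinarith
      · set L' := Nat.log b r with hL'
        have hL'L : L' + 1 ≤ L := by
          have : L' < L := Nat.log_lt_of_lt_pow hr1.ne' hrn
          omega
        have hoff : K * b ^ (L + 1) + q * b ^ L
            = ((K * b + q) * b ^ (L - (L' + 1))) * b ^ (L' + 1) := by
          have h1 : L - (L' + 1) + (L' + 1) = L := by omega
          calc K * b ^ (L + 1) + q * b ^ L = (K * b + q) * b ^ L := by ring
          _ = (K * b + q) * b ^ (L - (L' + 1) + (L' + 1)) := by rw [h1]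
          _ = ((K * b + q) * b ^ (L - (L' + 1))) * b ^ (L' + 1) := by
              rw [pow_add]; ring
        rw [hoff]
        refine le_trans (IH r (by omega) ((K * b + q) * b ^ (L - (L' + 1)))) ?_
        have hmono : (Real.sqrt b) ^ (L' + 1) ≤ (Real.sqrt b) ^ L := pow_le_pow_right₀ hs1 hL'L
        nlinarith [sq_nonneg (Real.sqrt b + 1)]
    have hsq : (Real.sqrt b) ^ 2 = (b:ℝ) := Real.sq_sqrt (by positivity)
    have hqle : (q:ℝ) ≤ (Real.sqrt b) ^ 2 - 1 := by
      rw [hsq]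
      have : (q:ℝ) + 1 ≤ (b:ℝ) := by exact_mod_cast hqb
      linarith
    have hsL : (0:ℝ) ≤ (Real.sqrt b) ^ L := pow_nonneg hs0 _
    have hkey : (q:ℝ) * (Real.sqrt b) ^ L ≤ ((Real.sqrt b) ^ 2 - 1) * (Real.sqrt b) ^ L :=
      mul_le_mul_of_nonneg_right hqle hsL
    have hps : (Real.sqrt b) ^ (L + 1) = (Real.sqrt b) ^ L * Real.sqrt b := pow_succ _ _
    calc dsc x A ((volume A).toReal) (K * b ^ (L + 1)) n
        ≤ q * (4 * (Real.sqrt b + 1) * (Real.sqrt b) ^ L)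
          + 4 * (Real.sqrt b + 1) ^ 2 * ((Real.sqrt b) ^ L - 1) := by linarith
    _ ≤ 4 * (Real.sqrt b + 1) ^ 2 * ((Real.sqrt b) ^ (L + 1) - 1) := by
        rw [hps]
        nlinarith [hkey, hs1, hsL]

/-- Isotropic discrepancy bound for the first `N` points of a `(0,2)`-sequence in base `b`. -/
theorem seq_isoDisc (b : ℕ) (hb : 2 ≤ b) (x : ℕ → EuclideanSpace ℝ (Fin 2))
    (hx : IsZeroTwoSeq b x) (N : ℕ) (hN : 0 < N) :
    isoDisc N (fun n : Fin N => x n) ≤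
      4 * Real.sqrt 2 * ((b : ℝ) ^ 2 + (b : ℝ) * Real.sqrt b) / Real.sqrt N := by
  obtain ⟨hpts, hx2⟩ := hx
  have hb0 : 0 < b := by omega
  have hb2 : (2:ℝ) ≤ (b:ℝ) := by exact_mod_cast hb
  have hs0 : (0:ℝ) ≤ Real.sqrt b := Real.sqrt_nonneg _
  have hsq : (Real.sqrt b) ^ 2 = (b:ℝ) := Real.sq_sqrt (by positivity)
  have hs1 : (1:ℝ) ≤ Real.sqrt b := by nlinarith
  have hs14 : (1.4:ℝ) ≤ Real.sqrt b := by nlinarith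
  have h14 : (1.4:ℝ) ≤ Real.sqrt 2 := by
    nlinarith [Real.sq_sqrt (by norm_num : (0:ℝ) ≤ 2), Real.sqrt_nonneg 2]
  have hNR : (0:ℝ) < (N:ℝ) := by exact_mod_cast hN
  have hsN : (0:ℝ) < Real.sqrt N := Real.sqrt_pos.mpr hNR
  have hsNN : Real.sqrt N * Real.sqrt N = (N:ℝ) := Real.mul_self_sqrt hNR.le
  -- the constant comparison
  have hconst : 4 * (Real.sqrt b + 1) ^ 2 * Real.sqrt b
      ≤ 4 * Real.sqrt 2 * ((b : ℝ) ^ 2 + (b : ℝ) * Real.sqrt b) := by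
    have hb4 : (b:ℝ)^2 = (Real.sqrt b)^4 := by nlinarith
    nlinarith [hs14, h14, hsq, mul_le_mul_of_nonneg_right h14
      (by positivity : (0:ℝ) ≤ (b:ℝ)^2 + (b:ℝ) * Real.sqrt b)]
  haveI : Nonempty {A : Set Pt // Convex ℝ A ∧ A ⊆ unitSq} :=
    ⟨⟨∅, convex_empty, Set.empty_subset _⟩⟩
  refine ciSup_le ?_
  rintro ⟨A, hA, hAs⟩
  unfold locDisc
  have hsum : (∑ n : Fin N, if x ↑n ∈ A then (1:ℝ) else 0)
      = (((Finset.Ico 0 (0 + N)).filter (fun i => x i ∈ A)).card : ℝ) := by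
    rw [Fin.sum_univ_eq_sum_range (fun n => if x n ∈ A then (1:ℝ) else 0) N]
    rw [Finset.sum_boole, Finset.range_eq_Ico]
    norm_num
  have hdel := dsc_rec b hb x hpts hx2 A hA hAs N 0
  rw [zero_mul] at hdel
  unfold dsc at hdel
  set L := Nat.log b N with hLdef
  have hpowL : (Real.sqrt b) ^ L ≤ Real.sqrt N := by
    have h1 : b ^ L ≤ N := Nat.pow_log_le_self b hN.ne'
    have h2 : ((b:ℝ)) ^ L ≤ (N:ℝ) := by exact_mod_cast h1
    have h3 : (Real.sqrt b) ^ L = Real.sqrt ((b:ℝ) ^ L) := by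
      rw [show ((b:ℝ)) ^ L = ((Real.sqrt b) ^ L) ^ 2 by
        rw [← pow_mul, mul_comm, pow_mul, hsq]]
      exact (Real.sqrt_sq (pow_nonneg hs0 L)).symm
    rw [h3]
    exact Real.sqrt_le_sqrt h2
  have hDelta : |(((Finset.Ico 0 (0 + N)).filter (fun i => x i ∈ A)).card : ℝ)
      - (N:ℝ) * (volume A).toReal|
      ≤ 4 * (Real.sqrt b + 1) ^ 2 * Real.sqrt b * Real.sqrt N := by
    refine le_trans hdel ?_
    have h1 : (Real.sqrt b) ^ (L + 1) - 1 ≤ Real.sqrt b * Real.sqrt N := by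
      have : (Real.sqrt b) ^ (L + 1) = Real.sqrt b * (Real.sqrt b) ^ L := by ring
      nlinarith [hpowL, hs1]
    nlinarith [sq_nonneg (Real.sqrt b + 1)]
  have heq : |(∑ n : Fin N, if x ↑n ∈ A then (1:ℝ) else 0) / N - (volume A).toReal|
      = |(((Finset.Ico 0 (0 + N)).filter (fun i => x i ∈ A)).card : ℝ)
        - (N:ℝ) * (volume A).toReal| / N := by
    rw [hsum]
    rw [show (((Finset.Ico 0 (0 + N)).filter (fun i => x i ∈ A)).card : ℝ) / N
        - (volume A).toReal
      = ((((Finset.Ico 0 (0 + N)).filter (fun i => x i ∈ A)).card : ℝ)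
        - (N:ℝ) * (volume A).toReal) / N by field_simp]
    rw [abs_div, abs_of_pos hNR]
  rw [heq]
  rw [div_le_div_iff₀ hNR hsN]
  calc |(((Finset.Ico 0 (0 + N)).filter (fun i => x i ∈ A)).card : ℝ)
      - (N:ℝ) * (volume A).toReal| * Real.sqrt N
      ≤ (4 * (Real.sqrt b + 1) ^ 2 * Real.sqrt b * Real.sqrt N) * Real.sqrt N :=
        mul_le_mul_of_nonneg_right hDelta hsN.le
  _ = (4 * (Real.sqrt b + 1) ^ 2 * Real.sqrt b) * (N:ℝ) := by
      rw [mul_assoc, hsNN]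
  _ ≤ 4 * Real.sqrt 2 * ((b : ℝ) ^ 2 + (b : ℝ) * Real.sqrt b) * (N:ℝ) :=
      mul_le_mul_of_nonneg_right hconst hNR.le
end

section
/- Let Fₘ denote the Fibonacci numbers (F₁ = F₂ = 1, Fₘ = Fₘ₋₁ + Fₘ₋₂). For odd index 2m+1, the Fibonacci lattice F_{2m+1} = {(n/F_{2m+1}, {n F_{2m}/F_{2m+1}}) : 0 ≤ n < F_{2m+1}} has minimum pairwise distance exactly 1/√F_{2m+1}. -/
open Nat

/-- The `n`-th point of the Fibonacci lattice with `F_N` points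
(`F = F_N`, `Fprev = F_{N-1}`). -/
noncomputable def fibLatticePoint (F Fprev n : ℕ) : EuclideanSpace ℝ (Fin 2) :=
  WithLp.toLp 2 ![(n : ℝ) / F, Int.fract ((n * Fprev : ℕ) / (F : ℝ))]

private lemma fibCassini (j : ℕ) : (fib (j+1) : ℤ)^2 = fib j * fib (j+2) + (-1)^j := by
  induction j with
  | zero => simp
  | succ n ih =>
    have h2 : (fib (n+2) : ℤ) = fib n + fib (n+1) := by exact_mod_cast (fib_add_two : fib (n+2) = _)
    have h3 : (fib (n+3) : ℤ) = fib (n+1) + fib (n+2) := by exact_mod_cast (fib_add_two : fib (n+3) = _)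
    show (fib (n+2) : ℤ)^2 = fib (n+1) * fib (n+3) + (-1)^(n+1)
    linear_combination (-1 : ℤ) * ih + (fib (n+2) : ℤ) * h2 + (-(fib (n+1) : ℤ)) * h3

private lemma fibKey1 (j : ℕ) :
    (fib (j+1) * fib (2*j+2) : ℤ) = fib j * fib (2*j+3) + (-1)^j * fib (j+2) := by
  have h1 : (fib (2*j+2) : ℤ) = fib j * fib (j+1) + fib (j+1) * fib (j+2) := by
    have := fib_add j (j+1); rw [show j + (j+1) + 1 = 2*j+2 by ring] at this; exact_mod_cast this
  have h2 : (fib (2*j+3) : ℤ) = fib (j+1) * fib (j+1) + fib (j+2) * fib (j+2) := by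
    have := fib_add (j+1) (j+1); rw [show (j+1) + (j+1) + 1 = 2*j+3 by ring] at this
    exact_mod_cast this
  have hc := fibCassini j
  linear_combination (fib (j+1) : ℤ) * h1 - (fib j : ℤ) * h2 + (fib (j+2) : ℤ) * hc

private lemma fibKey2 (j : ℕ) :
    (fib (j+2) * fib (2*j+2) : ℤ) = fib (j+1) * fib (2*j+3) - (-1)^j * fib (j+1) := by
  have h1 : (fib (2*j+2) : ℤ) = fib j * fib (j+1) + fib (j+1) * fib (j+2) := by
    have := fib_add j (j+1); rw [show j + (j+1) + 1 = 2*j+2 by ring] at this; exact_mod_cast this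
  have h2 : (fib (2*j+3) : ℤ) = fib (j+1) * fib (j+1) + fib (j+2) * fib (j+2) := by
    have := fib_add (j+1) (j+1); rw [show (j+1) + (j+1) + 1 = 2*j+3 by ring] at this
    exact_mod_cast this
  have hc := fibCassini j
  linear_combination (fib (j+2) : ℤ) * h1 - (fib (j+1) : ℤ) * h2 - (fib (j+1) : ℤ) * hc

private lemma fibLattice_dist (F P : ℕ) (hF : 0 < F) (n n' : ℕ) :
    dist (fibLatticePoint F P n) (fibLatticePoint F P n')
      = Real.sqrt ((((n:ℤ) - n' : ℤ) : ℝ)^2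
          + ((((n*P % F : ℕ) : ℤ) - ((n'*P % F : ℕ) : ℤ) : ℤ) : ℝ)^2) / F := by
  have hF' : (0:ℝ) < F := by exact_mod_cast hF
  rw [EuclideanSpace.dist_eq, Fin.sum_univ_two]
  simp only [fibLatticePoint, PiLp.toLp_apply, Matrix.cons_val_zero, Matrix.cons_val_one, Matrix.head_cons,
    Real.dist_eq, sq_abs, Int.fract_div_natCast_eq_div_natCast_mod]
  rw [show ((n:ℝ)/F - (n':ℝ)/F)^2 + (((n*P % F : ℕ):ℝ)/F - ((n'*P % F : ℕ):ℝ)/F)^2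
      = ((((n:ℤ) - n' : ℤ):ℝ)^2 + ((((n*P % F : ℕ) : ℤ) - ((n'*P % F : ℕ) : ℤ) : ℤ):ℝ)^2) / F^2 by
    rw [Int.cast_sub, Int.cast_sub, Int.cast_natCast, Int.cast_natCast, Int.cast_natCast,
      Int.cast_natCast]
    field_simp]
  rw [Real.sqrt_div' _ (by positivity), Real.sqrt_sq hF'.le]

private lemma fibLattice_core (j : ℕ) (k y : ℤ) (hk : k ≠ 0)
    (hy : (fib (2*j+3) : ℤ) ∣ k * fib (2*j+2) - y) :
    (fib (2*j+3) : ℤ) ≤ k^2 + y^2 := by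
  set a : ℤ := (fib (j+1) : ℤ) with ha
  set b : ℤ := (fib (j+2) : ℤ) with hb
  set F : ℤ := (fib (2*j+3) : ℤ) with hFdef
  set P : ℤ := (fib (2*j+2) : ℤ) with hPdef
  set g : ℤ := (fib j : ℤ) with hg
  set ε : ℤ := (-1)^j with he
  have hε2 : ε^2 = 1 := by rw [he, ← pow_mul, mul_comm, pow_mul]; norm_num
  have hFab : F = a^2 + b^2 := by
    rw [hFdef, ha, hb]
    have h := fib_add (j+1) (j+1)
    rw [show (j+1) + (j+1) + 1 = 2*j+3 by ring] at h
    push_cast [h]; ring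
  have hFpos : (0:ℤ) < F := by
    rw [hFdef]; exact_mod_cast fib_pos.mpr (by omega)
  have h1 : a * P = g * F + ε * b := fibKey1 j
  have h2 : b * P = a * F - ε * a := fibKey2 j
  clear_value a b F P g ε
  obtain ⟨c, hc⟩ := hy
  have hyy : y = k * P - c * F := by linarith
  set s : ℤ := ε * (k * a - c * b) with hsdef
  set t : ℤ := ε * (c * a - k * g) with htdef
  have hs : s * F = k * a + ε * y * b := by
    rw [hyy, hsdef]; linear_combination (-(ε*k))*h2 + (k*a)*hε2
  have ht : t * F = k * b - ε * y * a := by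
    rw [hyy, htdef]; linear_combination (ε*k)*h1 + (k*b)*hε2
  clear_value s t
  have e1 : (s*F)^2 = (k * a + ε * y * b)^2 := by rw [hs]
  have e2 : (t*F)^2 = (k * b - ε * y * a)^2 := by rw [ht]
  have hid : (k^2 + y^2) * F = (s^2 + t^2) * F^2 := by
    linear_combination (-1:ℤ)*e1 - e2 + (k^2 + y^2)*hFab - (y^2*(a^2+b^2))*hε2
  have heq : k^2 + y^2 = (s^2 + t^2) * F := by
    have h' : (k^2 + y^2) * F = ((s^2 + t^2) * F) * F := by rw [hid]; ring
    exact mul_right_cancel₀ hFpos.ne' h'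
  have hst : 1 ≤ s^2 + t^2 := by
    rcases eq_or_lt_of_le (by positivity : (0:ℤ) ≤ s^2 + t^2) with h0 | h0
    · exfalso
      have h00 : k^2 + y^2 = 0 := by rw [heq, ← h0]; ring
      have hk2 : k^2 = 0 := le_antisymm (by linarith [sq_nonneg y]) (sq_nonneg k)
      exact hk (sq_eq_zero_iff.mp hk2)
    · omega
  rw [heq]
  exact le_mul_of_one_le_left hFpos.le hst

private lemma fibLattice_mem (F P v r : ℕ) (hF : 0 < F) (hv : v < F) (hvpos : 0 < v)
    (hmod : (v * P) % F = r) (hsum : v^2 + r^2 = F) :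
    ∃ n n' : Fin F, n ≠ n' ∧ (1 / Real.sqrt F : ℝ)
      = dist (fibLatticePoint F P n) (fibLatticePoint F P n') := by
  refine ⟨⟨v, hv⟩, ⟨0, hF⟩, by simp [Fin.ext_iff]; omega, ?_⟩
  rw [fibLattice_dist F P hF v 0]
  rw [Nat.zero_mul, Nat.zero_mod, hmod]
  have hX : ((((v:ℤ) - (0:ℕ) : ℤ) : ℝ)^2 + ((((r:ℕ):ℤ) - ((0:ℕ):ℤ) : ℤ) : ℝ)^2) = (F : ℝ) := by
    push_cast
    rw [← hsum]
    push_cast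
    ring
  rw [hX]
  have hF' : (0:ℝ) < F := by exact_mod_cast hF
  rw [Real.sqrt_div_self']

/-- The Fibonacci lattice with `F_{2m+1}` points has minimum pairwise
distance exactly `1/√F_{2m+1}`. -/
theorem fibLattice_minDist (m : ℕ) (hm : 1 ≤ m) :
    IsLeast
      {d : ℝ | ∃ n n' : Fin (Nat.fib (2 * m + 1)), n ≠ n' ∧
        d = dist (fibLatticePoint (Nat.fib (2 * m + 1)) (Nat.fib (2 * m)) n)
                 (fibLatticePoint (Nat.fib (2 * m + 1)) (Nat.fib (2 * m)) n')}
      (1 / Real.sqrt (Nat.fib (2 * m + 1))) := by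
  obtain ⟨j, rfl⟩ : ∃ j, m = j + 1 := ⟨m - 1, by omega⟩
  simp only [show 2 * (j + 1) + 1 = 2*j+3 from by ring, show 2 * (j + 1) = 2*j+2 from by ring]
  set F : ℕ := fib (2*j+3) with hFdef
  set P : ℕ := fib (2*j+2) with hPdef
  have hF : 0 < F := fib_pos.mpr (by omega)
  have hb_lt : fib (j+2) < F := by
    calc fib (j+2) ≤ fib (2*j+2) := fib_mono (by omega)
    _ < fib (2*j+3) := fib_lt_fib_succ (by omega)
  have ha_lt : fib (j+1) < F := lt_of_le_of_lt (fib_mono (by omega)) hb_lt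
  have hsum : fib (j+1)^2 + fib (j+2)^2 = F := by
    have := fib_add (j+1) (j+1)
    rw [show (j+1) + (j+1) + 1 = 2*j+3 by ring] at this
    rw [hFdef, this]; ring
  constructor
  · -- membership
    rcases Nat.even_or_odd j with hj | hj
    · -- j even : (-1)^j = 1, use v = fib (j+1), residue fib (j+2)
      have hkey : fib (j+1) * P = fib j * F + fib (j+2) := by
        have h := fibKey1 j
        rw [hj.neg_one_pow, one_mul] at h
        exact_mod_cast h
      refine fibLattice_mem F P (fib (j+1)) (fib (j+2)) hF ha_lt (fib_pos.mpr (by omega)) ?_ ?_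
      · rw [hkey, add_comm, Nat.add_mul_mod_self_right, Nat.mod_eq_of_lt hb_lt]
      · omega
    · -- j odd : (-1)^j = -1, use v = fib (j+2), residue fib (j+1)
      have hkey : fib (j+2) * P = fib (j+1) * F + fib (j+1) := by
        have h := fibKey2 j
        rw [hj.neg_one_pow] at h
        push_cast at h ⊢
        linarith
      refine fibLattice_mem F P (fib (j+2)) (fib (j+1)) hF hb_lt (fib_pos.mpr (by omega)) ?_ ?_
      · rw [hkey, add_comm, Nat.add_mul_mod_self_right, Nat.mod_eq_of_lt ha_lt]
      · omega
  · -- lower bound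
    rintro d ⟨n, n', hne, rfl⟩
    rw [fibLattice_dist F P hF n n']
    set k : ℤ := (n : ℤ) - (n' : ℤ) with hk
    set y : ℤ := (((n : ℕ) * P % F : ℕ) : ℤ) - (((n' : ℕ) * P % F : ℕ) : ℤ) with hy
    have hkne : k ≠ 0 := by
      rw [hk]
      intro h
      apply hne
      have : ((n : ℕ) : ℤ) = ((n' : ℕ) : ℤ) := by linarith
      exact Fin.ext (by exact_mod_cast this)
    have hdvd : (F : ℤ) ∣ k * P - y := by
      have e : k * P - y = (((n:ℕ) * P : ℤ) - ((n:ℕ) * P : ℤ) % F)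
          - (((n':ℕ) * P : ℤ) - ((n':ℕ) * P : ℤ) % F) := by
        rw [hk, hy]
        push_cast
        ring
      rw [e]
      exact dvd_sub (Int.dvd_self_sub_of_emod_eq rfl) (Int.dvd_self_sub_of_emod_eq rfl)
    have hcore : (F : ℤ) ≤ k^2 + y^2 := fibLattice_core j k y hkne hdvd
    have hcoreR : (F : ℝ) ≤ ((k : ℝ))^2 + ((y : ℝ))^2 := by exact_mod_cast hcore
    have hF' : (0:ℝ) < F := by exact_mod_cast hF
    rw [← Real.sqrt_div_self']
    gcongr
end
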